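/- Let J be a complex structure on E and let Ω^♯ be a holomorphic symplectic structure on E relative to J. Set I = Ω^♯ + Ω̄^♯ and K = −i(Ω^♯ − Ω̄^♯), ℂ-linear endomorphisms of E_ℂ. Then I and K commute with complex conjugation (hence preserve the real subspace E ⊂ E_ℂ); I, J, K satisfy I² = J² = K² = IJK = −id and are orthogonal for the pairing; and all six Nijenhuis concomitants N(I,I), N(I,J), N(I,K), N(J,J), N(J,K), N(K,K) (formed with the ℂ-bilinearly extended bracket) vanish identically — that is, (I,J,K) restricts to a hypercomplex structure on E. -/
import Mathlib


open scoped TensorProduct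
section BC

variable {M N P : Type} [AddCommGroup M] [Module ℝ M] [AddCommGroup N] [Module ℝ N]
  [AddCommGroup P] [Module ℝ P]

/-- Complex-bilinear extension of an `ℝ`-bilinear map to the complexifications. -/
noncomputable def bcBilin (B : M →ₗ[ℝ] N →ₗ[ℝ] P) :
    ℂ ⊗[ℝ] M →ₗ[ℂ] ℂ ⊗[ℝ] N →ₗ[ℂ] ℂ ⊗[ℝ] P :=
  LinearMap.liftBaseChange ℂ ((LinearMap.baseChangeHom ℝ ℂ N P) ∘ₗ B)

/-- Complex conjugation on the complexification `ℂ ⊗[ℝ] M`. -/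
noncomputable def conjT (M : Type) [AddCommGroup M] [Module ℝ M] :
    ℂ ⊗[ℝ] M →ₗ[ℝ] ℂ ⊗[ℝ] M :=
  TensorProduct.map Complex.conjAe.toLinearMap LinearMap.id

/-- The `i`-eigenspace of a `ℂ`-linear endomorphism of `ℂ ⊗[ℝ] M`. -/
def eigP (Jc : ℂ ⊗[ℝ] M →ₗ[ℂ] ℂ ⊗[ℝ] M) : Set (ℂ ⊗[ℝ] M) :=
  {e | Jc e = Complex.I • e}

/-- The `-i`-eigenspace of a `ℂ`-linear endomorphism of `ℂ ⊗[ℝ] M`. -/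
def eigM (Jc : ℂ ⊗[ℝ] M →ₗ[ℂ] ℂ ⊗[ℝ] M) : Set (ℂ ⊗[ℝ] M) :=
  {e | Jc e = -(Complex.I • e)}

end BC

/-- An (algebraic) Courant algebroid: a commutative `ℝ`-algebra `A`, an `A`-module `E`,
a nondegenerate symmetric `A`-bilinear pairing, an anchor with values in `ℝ`-linear
derivations of `A`, a map `Dm : A → E`, and an `ℝ`-bilinear Dorfman bracket. -/
structure CourantAlgebroid (A E : Type) [CommRing A] [Algebra ℝ A]
    [AddCommGroup E] [Module ℝ E] [Module A E] [IsScalarTower ℝ A E] : Type where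
  pair : E →ₗ[A] E →ₗ[A] A
  pair_symm : ∀ x y, pair x y = pair y x
  pair_nondeg : ∀ x, (∀ y, pair x y = 0) → x = 0
  anchor : E →ₗ[A] Derivation ℝ A A
  Dm : A →ₗ[ℝ] E
  pair_Dm : ∀ (f : A) (x : E), pair (Dm f) x = (1/2 : ℝ) • anchor x f
  brac : E →ₗ[ℝ] E →ₗ[ℝ] E
  brac_leibniz : ∀ x y z, brac x (brac y z) = brac (brac x y) z + brac y (brac x z)
  anchor_brac : ∀ (x y : E) (f : A),
    anchor (brac x y) f = anchor x (anchor y f) - anchor y (anchor x f)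
  brac_smul : ∀ (f : A) (x y : E), brac x (f • y) = anchor x f • y + f • brac x y
  brac_add_swap : ∀ x y, brac x y + brac y x = (2 : ℝ) • Dm (pair x y)
  Dm_brac : ∀ (f : A) (x : E), brac (Dm f) x = 0
  anchor_pair : ∀ x y z, anchor x (pair y z) = pair (brac x y) z + pair y (brac x z)

namespace CourantAlgebroid

variable {A E : Type} [CommRing A] [Algebra ℝ A]
    [AddCommGroup E] [Module ℝ E] [Module A E] [IsScalarTower ℝ A E]

/-- The Nijenhuis concomitant of two operators with respect to a bracket. -/
def nijGen {M : Type*} [AddCommGroup M] (br : M → M → M) (F G : M → M) (U V : M) : M :=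
  br (F U) (G V) - F (br U (G V)) - G (br (F U) V) + F (G (br U V))
    + br (G U) (F V) - G (br U (F V)) - F (br (G U) V) + G (F (br U V))

/-- The Nijenhuis concomitant `N(F,G)` of two `A`-linear endomorphisms of `E`. -/
def nij (C : CourantAlgebroid A E) (F G : E →ₗ[A] E) (U V : E) : E :=
  nijGen (fun x y => C.brac x y) (fun e => F e) (fun e => G e) U V

/-- An almost complex structure: an orthogonal endomorphism squaring to `-1`. -/
def IsAlmostComplexStr (C : CourantAlgebroid A E) (J : E →ₗ[A] E) : Prop :=
  (∀ e, J (J e) = -e) ∧ ∀ x y, C.pair (J x) (J y) = C.pair x y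

/-- A complex structure: an almost complex structure with vanishing Nijenhuis concomitant. -/
def IsComplexStr (C : CourantAlgebroid A E) (J : E →ₗ[A] E) : Prop :=
  C.IsAlmostComplexStr J ∧ ∀ U V, C.nij J J U V = 0

/-- An almost hypercomplex structure: a triple of almost complex structures
satisfying the quaternionic relations. -/
def IsAlmostHypercomplex (C : CourantAlgebroid A E) (I J K : E →ₗ[A] E) : Prop :=
  C.IsAlmostComplexStr I ∧ C.IsAlmostComplexStr J ∧ C.IsAlmostComplexStr K ∧
    ∀ e, I (J (K e)) = -e

/-- A hypercomplex structure: an almost hypercomplex structure all of whose six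
Nijenhuis concomitants vanish. -/
def IsHypercomplex (C : CourantAlgebroid A E) (I J K : E →ₗ[A] E) : Prop :=
  C.IsAlmostHypercomplex I J K ∧
    (∀ U V, C.nij I I U V = 0) ∧ (∀ U V, C.nij I J U V = 0) ∧ (∀ U V, C.nij I K U V = 0) ∧
    (∀ U V, C.nij J J U V = 0) ∧ (∀ U V, C.nij J K U V = 0) ∧ (∀ U V, C.nij K K U V = 0)

/-- The Poisson-type bracket on `A` induced by a skew-symmetric endomorphism `F`. -/
def pb (C : CourantAlgebroid A E) (F : E →ₗ[A] E) (f g : A) : A :=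
  C.pair (F (C.Dm f)) (C.Dm g)

/-- `Δ_f(U,V)` associated with an almost hypercomplex triple. -/
def Delta (C : CourantAlgebroid A E) (I J K : E →ₗ[A] E) (f : A) (U V : E) : E :=
  C.pair U V • C.Dm f + C.pair (I U) V • I (C.Dm f) + C.pair (J U) V • J (C.Dm f)
    + C.pair (K U) V • K (C.Dm f)

/-- A hypercomplex connection relative to an almost hypercomplex triple. -/
def IsHConn (C : CourantAlgebroid A E) (I J K : E →ₗ[A] E)
    (conn : E →ₗ[ℝ] E →ₗ[ℝ] E) : Prop :=
  (∀ (f : A) (U V : E), conn (f • U) V = f • conn U V) ∧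
  (∀ (f : A) (U V : E),
    conn U (f • V) = C.anchor U f • V + f • conn U V - C.Delta I J K f U V)

/-- The torsion of an `ℝ`-bilinear connection. -/
noncomputable def torsion (C : CourantAlgebroid A E) (conn : E →ₗ[ℝ] E →ₗ[ℝ] E) (U V : E) : E :=
  conn U V - conn V U - (1/2 : ℝ) • (C.brac U V - C.brac V U)

/-- The canonical hypercomplex connection. -/
noncomputable def hconn (C : CourantAlgebroid A E) (I J K : E →ₗ[A] E) (U V : E) : E :=
  -((1/2 : ℝ) • K (C.brac (J V) (I U) - J (C.brac V (I U)) - I (C.brac (J V) U)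
      + J (I (C.brac V U))))

/-- The pairing as an `ℝ`-bilinear map. -/
noncomputable def pairR (C : CourantAlgebroid A E) : E →ₗ[ℝ] E →ₗ[ℝ] A :=
  LinearMap.mk₂ ℝ (fun x y => C.pair x y)
    (fun x x' y => by simp)
    (fun r x y => by
      show C.pair (r • x) y = r • C.pair x y
      rw [← algebraMap_smul A r x, map_smul, LinearMap.smul_apply, algebraMap_smul])
    (fun x y y' => by simp)
    (fun r x y => by
      show C.pair x (r • y) = r • C.pair x y
      rw [← algebraMap_smul A r y, map_smul, algebraMap_smul])

/-- The anchor as an `ℝ`-bilinear map `E → A → A`. -/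
noncomputable def rhoR (C : CourantAlgebroid A E) : E →ₗ[ℝ] A →ₗ[ℝ] A :=
  LinearMap.mk₂ ℝ (fun x f => C.anchor x f)
    (fun x x' f => by simp)
    (fun r x f => by
      show C.anchor (r • x) f = r • C.anchor x f
      rw [← algebraMap_smul A r x, map_smul, Derivation.smul_apply, algebraMap_smul])
    (fun x f f' => by simp)
    (fun r x f => by simp)

/-- The `A`-module structure on `E` as an `ℝ`-bilinear map. -/
noncomputable def smulR (A E : Type) [CommRing A] [Algebra ℝ A]
    [AddCommGroup E] [Module ℝ E] [Module A E] [IsScalarTower ℝ A E] :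
    A →ₗ[ℝ] E →ₗ[ℝ] E :=
  LinearMap.mk₂ ℝ (fun a e => a • e)
    (fun a a' e => add_smul a a' e)
    (fun r a e => smul_assoc r a e)
    (fun a e e' => smul_add a e e')
    (fun r a e => smul_comm a r e)

/-- Complex-bilinear extension of the pairing. -/
noncomputable def pairC (C : CourantAlgebroid A E) :
    ℂ ⊗[ℝ] E →ₗ[ℂ] ℂ ⊗[ℝ] E →ₗ[ℂ] ℂ ⊗[ℝ] A := bcBilin C.pairR

/-- Complex-bilinear extension of the Dorfman bracket. -/
noncomputable def bracC (C : CourantAlgebroid A E) :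
    ℂ ⊗[ℝ] E →ₗ[ℂ] ℂ ⊗[ℝ] E →ₗ[ℂ] ℂ ⊗[ℝ] E := bcBilin C.brac

/-- Complex-bilinear extension of the anchor. -/
noncomputable def rhoC (C : CourantAlgebroid A E) :
    ℂ ⊗[ℝ] E →ₗ[ℂ] ℂ ⊗[ℝ] A →ₗ[ℂ] ℂ ⊗[ℝ] A := bcBilin C.rhoR

/-- Complex-bilinear extension of the `A`-action on `E`. -/
noncomputable def smulC (C : CourantAlgebroid A E) :
    ℂ ⊗[ℝ] A →ₗ[ℂ] ℂ ⊗[ℝ] E →ₗ[ℂ] ℂ ⊗[ℝ] E := bcBilin (smulR A E)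

/-- The `ℂ`-linear extension of an `A`-linear endomorphism of `E` to `ℂ ⊗[ℝ] E`. -/
noncomputable def cext (F : E →ₗ[A] E) : ℂ ⊗[ℝ] E →ₗ[ℂ] ℂ ⊗[ℝ] E :=
  (F.restrictScalars ℝ).baseChange ℂ

/-- `Ω^♯ = (1/2)(I + iK)` associated with an (almost) hypercomplex triple. -/
noncomputable def OmS (I K : E →ₗ[A] E) : ℂ ⊗[ℝ] E →ₗ[ℂ] ℂ ⊗[ℝ] E :=
  (1/2 : ℂ) • (cext I + Complex.I • cext K)

/-- `Ω̄^♯ = (1/2)(I - iK)` associated with an (almost) hypercomplex triple. -/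
noncomputable def ObS (I K : E →ₗ[A] E) : ℂ ⊗[ℝ] E →ₗ[ℂ] ℂ ⊗[ℝ] E :=
  (1/2 : ℂ) • (cext I - Complex.I • cext K)

/-- `Ω(ξ,η) = ⟨Ω^♯ξ, η⟩`. -/
noncomputable def Omf (C : CourantAlgebroid A E) (I K : E →ₗ[A] E)
    (x y : ℂ ⊗[ℝ] E) : ℂ ⊗[ℝ] A :=
  C.pairC (OmS I K x) y

/-- The complexified hypercomplex connection on `ℂ ⊗[ℝ] E`. -/
noncomputable def hconnC (C : CourantAlgebroid A E) (I J K : E →ₗ[A] E)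
    (U V : ℂ ⊗[ℝ] E) : ℂ ⊗[ℝ] E :=
  -((1/2 : ℂ) • cext K (C.bracC (cext J V) (cext I U) - cext J (C.bracC V (cext I U))
      - cext I (C.bracC (cext J V) U) + cext J (cext I (C.bracC V U))))

end CourantAlgebroid

open CourantAlgebroid

section Aux

variable {M N P : Type} [AddCommGroup M] [Module ℝ M] [AddCommGroup N] [Module ℝ N]
  [AddCommGroup P] [Module ℝ P]

lemma bcBilin_tmul (B : M →ₗ[ℝ] N →ₗ[ℝ] P) (z w : ℂ) (m : M) (n : N) :
    bcBilin B (z ⊗ₜ m) (w ⊗ₜ n) = (z * w) ⊗ₜ (B m n) := by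
  simp [bcBilin, TensorProduct.smul_tmul', smul_eq_mul]

lemma conjT_tmul (z : ℂ) (m : M) : conjT M (z ⊗ₜ m) = (starRingEnd ℂ) z ⊗ₜ m := by
  simp [conjT]

lemma conjT_conjT (x : ℂ ⊗[ℝ] M) : conjT M (conjT M x) = x := by
  induction x using TensorProduct.induction_on with
  | zero => simp
  | tmul z m => simp [conjT_tmul]
  | add a b ha hb => simp [map_add, ha, hb]

lemma conjT_smul (c : ℂ) (x : ℂ ⊗[ℝ] M) :
    conjT M (c • x) = (starRingEnd ℂ) c • conjT M x := by
  induction x using TensorProduct.induction_on with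
  | zero => simp
  | tmul z m => simp [TensorProduct.smul_tmul', conjT_tmul, mul_comm]
  | add a b ha hb => simp [map_add, smul_add, ha, hb]

lemma bcBilin_conj (B : M →ₗ[ℝ] N →ₗ[ℝ] P) (x : ℂ ⊗[ℝ] M) (y : ℂ ⊗[ℝ] N) :
    bcBilin B (conjT M x) (conjT N y) = conjT P (bcBilin B x y) := by
  induction x using TensorProduct.induction_on with
  | zero => simp
  | tmul z m =>
    induction y using TensorProduct.induction_on with
    | zero => simp
    | tmul w n => simp [conjT_tmul, bcBilin_tmul]
    | add a b ha hb => simp [map_add, ha, hb]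
  | add a b ha hb => simp [map_add, LinearMap.add_apply, ha, hb]

end Aux

section NijGen
variable {W : Type*} [AddCommGroup W]

lemma nijGen_addl (br : W → W → W)
    (hbl : ∀ x y z, br (x+y) z = br x z + br y z)
    (hbr : ∀ x y z, br x (y+z) = br x y + br x z)
    (F G : W → W) (hF : ∀ x y, F (x+y) = F x + F y) (hG : ∀ x y, G (x+y) = G x + G y)
    (a b V : W) :
    CourantAlgebroid.nijGen br F G (a+b) V =
      CourantAlgebroid.nijGen br F G a V + CourantAlgebroid.nijGen br F G b V := by
  simp only [CourantAlgebroid.nijGen, hbl, hbr, hF, hG]; abel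

lemma nijGen_addr (br : W → W → W)
    (hbl : ∀ x y z, br (x+y) z = br x z + br y z)
    (hbr : ∀ x y z, br x (y+z) = br x y + br x z)
    (F G : W → W) (hF : ∀ x y, F (x+y) = F x + F y) (hG : ∀ x y, G (x+y) = G x + G y)
    (U a b : W) :
    CourantAlgebroid.nijGen br F G U (a+b) =
      CourantAlgebroid.nijGen br F G U a + CourantAlgebroid.nijGen br F G U b := by
  simp only [CourantAlgebroid.nijGen, hbl, hbr, hF, hG]; abel

lemma nijGen_comm (br : W → W → W) (F G : W → W) (U V : W) :
    CourantAlgebroid.nijGen br F G U V = CourantAlgebroid.nijGen br G F U V := by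
  simp only [CourantAlgebroid.nijGen]; abel

end NijGen
section Aux2

variable {A E : Type} [CommRing A] [Algebra ℝ A] [AddCommGroup E] [Module ℝ E]
    [Module A E] [IsScalarTower ℝ A E]

lemma cext_tmul (F : E →ₗ[A] E) (z : ℂ) (m : E) : cext F (z ⊗ₜ m) = z ⊗ₜ F m := rfl

lemma cext_conjT (F : E →ₗ[A] E) (x : ℂ ⊗[ℝ] E) :
    cext F (conjT E x) = conjT E (cext F x) := by
  induction x using TensorProduct.induction_on with
  | zero => simp
  | tmul z m => simp [conjT_tmul, cext_tmul]
  | add a b ha hb => simp [map_add, ha, hb]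

variable (C : CourantAlgebroid A E)

lemma pairC_tmul (z w : ℂ) (x y : E) :
    C.pairC (z ⊗ₜ x) (w ⊗ₜ y) = (z * w) ⊗ₜ (C.pair x y) := by
  simp [CourantAlgebroid.pairC, bcBilin_tmul, CourantAlgebroid.pairR]

lemma bracC_tmul (z w : ℂ) (x y : E) :
    C.bracC (z ⊗ₜ x) (w ⊗ₜ y) = (z * w) ⊗ₜ (C.brac x y) := by
  simp [CourantAlgebroid.bracC, bcBilin_tmul]

lemma rhoC_tmul (z w : ℂ) (x : E) (f : A) :
    C.rhoC (z ⊗ₜ x) (w ⊗ₜ f) = (z * w) ⊗ₜ (C.anchor x f) := by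
  simp [CourantAlgebroid.rhoC, bcBilin_tmul, CourantAlgebroid.rhoR]

lemma pairC_conj (x y : ℂ ⊗[ℝ] E) :
    C.pairC (conjT E x) (conjT E y) = conjT A (C.pairC x y) :=
  bcBilin_conj _ x y

lemma bracC_conj (x y : ℂ ⊗[ℝ] E) :
    C.bracC (conjT E x) (conjT E y) = conjT E (C.bracC x y) :=
  bcBilin_conj _ x y

lemma pairC_symm (x y : ℂ ⊗[ℝ] E) : C.pairC x y = C.pairC y x := by
  induction x using TensorProduct.induction_on with
  | zero => simp
  | tmul z m =>
    induction y using TensorProduct.induction_on with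
    | zero => simp
    | tmul w n => rw [pairC_tmul, pairC_tmul, mul_comm, C.pair_symm]
    | add a b ha hb => simp [map_add, ha, hb]
  | add a b ha hb => simp [map_add, LinearMap.add_apply, ha, hb]

/-- complexified Dm -/
noncomputable def DmC : ℂ ⊗[ℝ] A →ₗ[ℂ] ℂ ⊗[ℝ] E := (C.Dm).baseChange ℂ

lemma DmC_tmul (z : ℂ) (f : A) : DmC C (z ⊗ₜ f) = z ⊗ₜ C.Dm f := rfl

lemma pair_DmC (f : ℂ ⊗[ℝ] A) (x : ℂ ⊗[ℝ] E) :
    C.pairC (DmC C f) x = (1/2 : ℂ) • C.rhoC x f := by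
  induction f using TensorProduct.induction_on with
  | zero => simp
  | tmul z g =>
    induction x using TensorProduct.induction_on with
    | zero => simp
    | tmul w y =>
      rw [DmC_tmul, pairC_tmul, rhoC_tmul, C.pair_Dm, TensorProduct.tmul_smul,
        TensorProduct.smul_tmul', TensorProduct.smul_tmul']
      congr 1
      simp [Complex.real_smul, smul_eq_mul]
      ring
    | add a b ha hb => simp [map_add, smul_add, ha, hb]
  | add a b ha hb =>
    simp only [map_add, LinearMap.add_apply, LinearMap.map_add, smul_add, ha, hb]

lemma anchor_pairC (x y z : ℂ ⊗[ℝ] E) :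
    C.rhoC x (C.pairC y z) = C.pairC (C.bracC x y) z + C.pairC y (C.bracC x z) := by
  induction x using TensorProduct.induction_on with
  | zero => simp
  | tmul a u =>
    induction y using TensorProduct.induction_on with
    | zero => simp
    | tmul b v =>
      induction z using TensorProduct.induction_on with
      | zero => simp
      | tmul c w =>
        rw [pairC_tmul, rhoC_tmul, bracC_tmul, bracC_tmul, pairC_tmul, pairC_tmul,
          C.anchor_pair, TensorProduct.tmul_add]
        ring_nf
      | add s t hs ht => simp only [map_add, LinearMap.map_add, hs, ht]; abel
    | add s t hs ht =>
      simp only [map_add, LinearMap.add_apply, LinearMap.map_add, hs, ht]; abel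
  | add s t hs ht =>
    simp only [map_add, LinearMap.add_apply, LinearMap.map_add, hs, ht]; abel

lemma brac_add_swapC (x y : ℂ ⊗[ℝ] E) :
    C.bracC x y + C.bracC y x = (2 : ℂ) • DmC C (C.pairC x y) := by
  induction x using TensorProduct.induction_on with
  | zero => simp
  | tmul a u =>
    induction y using TensorProduct.induction_on with
    | zero => simp
    | tmul b v =>
      rw [bracC_tmul, bracC_tmul, pairC_tmul, mul_comm b a, ← TensorProduct.tmul_add,
        C.brac_add_swap, DmC_tmul, TensorProduct.smul_tmul']
      rw [TensorProduct.tmul_smul, TensorProduct.smul_tmul']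
      congr 1
    | add s t hs ht =>
      simp only [map_add, LinearMap.map_add, LinearMap.add_apply, smul_add]
      rw [← hs, ← ht]; abel
  | add s t hs ht =>
    simp only [map_add, LinearMap.map_add, LinearMap.add_apply, smul_add]
    rw [← hs, ← ht]; abel

end Aux2
section Aux3

variable {A E : Type} [CommRing A] [Algebra ℝ A] [AddCommGroup E] [Module ℝ E]
    [Module A E] [IsScalarTower ℝ A E]

/-- real part projection of a complexification -/
noncomputable def reT (M : Type) [AddCommGroup M] [Module ℝ M] :
    ℂ ⊗[ℝ] M →ₗ[ℝ] M :=
  (TensorProduct.lid ℝ M).toLinearMap.comp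
    (TensorProduct.map Complex.reLm LinearMap.id)

/-- imaginary part projection of a complexification -/
noncomputable def imT (M : Type) [AddCommGroup M] [Module ℝ M] :
    ℂ ⊗[ℝ] M →ₗ[ℝ] M :=
  (TensorProduct.lid ℝ M).toLinearMap.comp
    (TensorProduct.map Complex.imLm LinearMap.id)

lemma reT_tmul (M : Type) [AddCommGroup M] [Module ℝ M] (z : ℂ) (m : M) :
    reT M (z ⊗ₜ m) = z.re • m := by
  simp [reT]

lemma imT_tmul (M : Type) [AddCommGroup M] [Module ℝ M] (z : ℂ) (m : M) :
    imT M (z ⊗ₜ m) = z.im • m := by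
  simp [imT]

lemma reim_decomp {M : Type} [AddCommGroup M] [Module ℝ M] (x : ℂ ⊗[ℝ] M) :
    x = (1 : ℂ) ⊗ₜ reT M x + Complex.I ⊗ₜ imT M x := by
  induction x using TensorProduct.induction_on with
  | zero => simp
  | tmul z m =>
    rw [reT_tmul, imT_tmul, TensorProduct.tmul_smul, TensorProduct.tmul_smul,
      TensorProduct.smul_tmul', TensorProduct.smul_tmul']
    rw [← TensorProduct.add_tmul]
    congr 1
    simp [Complex.real_smul, Complex.re_add_im]
  | add a b ha hb =>
    rw [map_add, map_add, TensorProduct.tmul_add, TensorProduct.tmul_add]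
    conv_lhs => rw [ha, hb]
    abel

variable (C : CourantAlgebroid A E)

lemma pairC_nondeg (x : ℂ ⊗[ℝ] E) (h : ∀ y, C.pairC x y = 0) : x = 0 := by
  have hu : ∀ w : E, C.pair (reT E x) w = 0 ∧ C.pair (imT E x) w = 0 := by
    intro w
    have h1 := h ((1 : ℂ) ⊗ₜ w)
    rw [reim_decomp (M := E) x] at h1
    rw [map_add, LinearMap.add_apply, pairC_tmul, pairC_tmul] at h1
    have hre := congrArg (reT A) h1
    have him := congrArg (imT A) h1
    rw [map_add, reT_tmul, reT_tmul, map_zero] at hre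
    rw [map_add, imT_tmul, imT_tmul, map_zero] at him
    simp at hre him
    exact ⟨hre, him⟩
  have h1 : reT E x = 0 := C.pair_nondeg _ (fun w => (hu w).1)
  have h2 : imT E x = 0 := C.pair_nondeg _ (fun w => (hu w).2)
  rw [reim_decomp (M := E) x, h1, h2, TensorProduct.tmul_zero, TensorProduct.tmul_zero,
    add_zero]

variable (J : E →ₗ[A] E)

lemma cextJJ (hJ : C.IsComplexStr J) (e : ℂ ⊗[ℝ] E) : cext J (cext J e) = -e := by
  induction e using TensorProduct.induction_on with
  | zero => simp
  | tmul z m => rw [cext_tmul, cext_tmul, hJ.1.1, TensorProduct.tmul_neg]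
  | add a b ha hb => simp only [map_add, ha, hb]; abel

lemma pairC_J (hJ : C.IsComplexStr J) (x y : ℂ ⊗[ℝ] E) :
    C.pairC (cext J x) (cext J y) = C.pairC x y := by
  induction x using TensorProduct.induction_on with
  | zero => simp
  | tmul z m =>
    induction y using TensorProduct.induction_on with
    | zero => simp
    | tmul w n => rw [cext_tmul, cext_tmul, pairC_tmul, pairC_tmul, hJ.1.2]
    | add a b ha hb => simp only [map_add, LinearMap.map_add, ha, hb]
  | add a b ha hb => simp only [map_add, LinearMap.map_add, LinearMap.add_apply, ha, hb]

lemma cextJ_conjT (x : ℂ ⊗[ℝ] E) : cext J (conjT E x) = conjT E (cext J x) :=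
  cext_conjT J x

lemma NJJC (hJ : C.IsComplexStr J) (U V : ℂ ⊗[ℝ] E) :
    nijGen (fun x y => C.bracC x y) (fun e => cext J e) (fun e => cext J e) U V = 0 := by
  induction U using TensorProduct.induction_on with
  | zero => simp [nijGen]
  | tmul z u =>
    induction V using TensorProduct.induction_on with
    | zero => simp [nijGen]
    | tmul w v =>
      have h : C.nij J J u v = 0 := hJ.2 u v
      have h2 := congrArg (fun r => (z*w) ⊗ₜ[ℝ] r) h
      simp only [CourantAlgebroid.nij, nijGen, TensorProduct.tmul_sub,
        TensorProduct.tmul_add, TensorProduct.tmul_zero] at h2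
      simp only [nijGen, cext_tmul, bracC_tmul]
      exact h2
    | add a b ha hb =>
      rw [nijGen_addr (fun x y => C.bracC x y) (fun x y z => by simp [map_add])
        (fun x y z => by simp [map_add]) _ _
        (fun x y => map_add (cext J) x y) (fun x y => map_add (cext J) x y), ha, hb, add_zero]
  | add a b ha hb =>
    rw [nijGen_addl (fun x y => C.bracC x y) (fun x y z => by simp [map_add])
      (fun x y z => by simp [map_add]) _ _
      (fun x y => map_add (cext J) x y) (fun x y => map_add (cext J) x y), ha, hb, add_zero]

end Aux3
section Aux4

variable {A E : Type} [CommRing A] [Algebra ℝ A] [AddCommGroup E] [Module ℝ E]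
    [Module A E] [IsScalarTower ℝ A E]

/-- Bundle of hypotheses of the main theorem. -/
structure HSS (C : CourantAlgebroid A E) (J : E →ₗ[A] E)
    (Os : ℂ ⊗[ℝ] E →ₗ[ℂ] ℂ ⊗[ℝ] E) : Prop where
  hJ : C.IsComplexStr J
  hskew : ∀ ξ η : ℂ ⊗[ℝ] E, C.pairC (Os ξ) η = -C.pairC ξ (Os η)
  hLp : ∀ e ∈ eigP (cext (A := A) (E := E) J), Os e = 0
  hLm : ∀ e ∈ eigM (cext (A := A) (E := E) J), Os e ∈ eigP (cext (A := A) (E := E) J)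
  hnd : ∀ e : ℂ ⊗[ℝ] E,
      Os (conjT E (Os (conjT E e))) + conjT E (Os (conjT E (Os e))) = -e
  hclosed : ∀ ξ η ζ : ℂ ⊗[ℝ] E,
      ξ ∈ eigM (cext (A := A) (E := E) J) → η ∈ eigM (cext (A := A) (E := E) J) →
      ζ ∈ eigM (cext (A := A) (E := E) J) →
      C.rhoC ξ (C.pairC (Os η) ζ) - C.rhoC η (C.pairC (Os ξ) ζ)
        + C.rhoC ζ (C.pairC (Os ξ) η) - C.pairC (Os (C.bracC ξ η)) ζ
        + C.pairC (Os (C.bracC ξ ζ)) η - C.pairC (Os (C.bracC η ζ)) ξ = 0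

variable {C : CourantAlgebroid A E} {J : E →ₗ[A] E} {Os : ℂ ⊗[ℝ] E →ₗ[ℂ] ℂ ⊗[ℝ] E}

/-- the conjugate operator -/
noncomputable def Obf (Os : ℂ ⊗[ℝ] E →ₗ[ℂ] ℂ ⊗[ℝ] E) : ℂ ⊗[ℝ] E → ℂ ⊗[ℝ] E :=
  fun x => conjT E (Os (conjT E x))

lemma Obf_add (x y : ℂ ⊗[ℝ] E) : Obf Os (x + y) = Obf Os x + Obf Os y := by
  simp [Obf, map_add]

lemma Obf_zero : Obf Os (0 : ℂ ⊗[ℝ] E) = 0 := by simp [Obf]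

lemma Obf_smul (c : ℂ) (x : ℂ ⊗[ℝ] E) : Obf Os (c • x) = c • Obf Os x := by
  simp [Obf, conjT_smul, map_smul]

lemma Obf_sub (x y : ℂ ⊗[ℝ] E) : Obf Os (x - y) = Obf Os x - Obf Os y := by
  simp [Obf, map_sub]

lemma conj_Os (x : ℂ ⊗[ℝ] E) : conjT E (Os x) = Obf Os (conjT E x) := by
  simp [Obf, conjT_conjT]

lemma conj_Obf (x : ℂ ⊗[ℝ] E) : conjT E (Obf Os x) = Os (conjT E x) := by
  simp [Obf, conjT_conjT]

lemma mem_L_iff (x : ℂ ⊗[ℝ] E) :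
    x ∈ eigP (cext (A := A) J) ↔ cext J x = Complex.I • x := Iff.rfl

lemma mem_M_iff (x : ℂ ⊗[ℝ] E) :
    x ∈ eigM (cext (A := A) J) ↔ cext J x = -(Complex.I • x) := Iff.rfl

lemma conj_mem_M {x : ℂ ⊗[ℝ] E} (hx : x ∈ eigP (cext (A := A) J)) :
    conjT E x ∈ eigM (cext (A := A) J) := by
  rw [mem_M_iff, cextJ_conjT, (mem_L_iff x).mp hx, conjT_smul]
  simp

lemma conj_mem_L {x : ℂ ⊗[ℝ] E} (hx : x ∈ eigM (cext (A := A) J)) :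
    conjT E x ∈ eigP (cext (A := A) J) := by
  rw [mem_L_iff, cextJ_conjT, (mem_M_iff x).mp hx, map_neg, conjT_smul]
  simp

lemma L_orth (h : HSS C J Os) {x y : ℂ ⊗[ℝ] E} (hx : x ∈ eigP (cext (A := A) J))
    (hy : y ∈ eigP (cext (A := A) J)) : C.pairC x y = 0 := by
  have hp := pairC_J C J h.hJ x y
  rw [(mem_L_iff x).mp hx, (mem_L_iff y).mp hy] at hp
  simp only [map_smul, LinearMap.smul_apply, smul_smul, Complex.I_mul_I,
    neg_one_smul] at hp
  have h2 : (2:ℂ) • C.pairC x y = 0 := by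
    linear_combination (norm := module) (-1 : ℂ) • hp
  rcases smul_eq_zero.mp h2 with h' | h'
  · norm_num at h'
  · exact h'

lemma M_orth (h : HSS C J Os) {x y : ℂ ⊗[ℝ] E} (hx : x ∈ eigM (cext (A := A) J))
    (hy : y ∈ eigM (cext (A := A) J)) : C.pairC x y = 0 := by
  have hp := pairC_J C J h.hJ x y
  rw [(mem_M_iff x).mp hx, (mem_M_iff y).mp hy] at hp
  simp only [map_neg, map_smul, LinearMap.neg_apply, LinearMap.smul_apply, smul_neg,
    neg_neg, smul_smul, Complex.I_mul_I, neg_one_smul] at hp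
  have h2 : (2:ℂ) • C.pairC x y = 0 := by
    linear_combination (norm := module) (-1 : ℂ) • hp
  rcases smul_eq_zero.mp h2 with h' | h'
  · norm_num at h'
  · exact h'

/-- the projection onto the i-eigenspace -/
noncomputable def plf (J : E →ₗ[A] E) (x : ℂ ⊗[ℝ] E) : ℂ ⊗[ℝ] E :=
  (1/2 : ℂ) • (x - Complex.I • cext J x)

/-- the projection onto the -i-eigenspace -/
noncomputable def qmf (J : E →ₗ[A] E) (x : ℂ ⊗[ℝ] E) : ℂ ⊗[ℝ] E :=
  (1/2 : ℂ) • (x + Complex.I • cext J x)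

lemma plf_add_qmf (x : ℂ ⊗[ℝ] E) : plf J x + qmf J x = x := by
  simp only [plf, qmf]; module

lemma plf_mem (h : HSS C J Os) (x : ℂ ⊗[ℝ] E) : plf J x ∈ eigP (cext (A := A) J) := by
  rw [mem_L_iff, plf, map_smul, map_sub, map_smul, cextJJ C J h.hJ]
  match_scalars <;> simp [Complex.ext_iff] <;> ring

lemma qmf_mem (h : HSS C J Os) (x : ℂ ⊗[ℝ] E) : qmf J x ∈ eigM (cext (A := A) J) := by
  rw [mem_M_iff, qmf, map_smul, map_add, map_smul, cextJJ C J h.hJ]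
  match_scalars <;> simp [Complex.ext_iff] <;> ring

lemma Os_mem_L (h : HSS C J Os) (x : ℂ ⊗[ℝ] E) : Os x ∈ eigP (cext (A := A) J) := by
  have := plf_add_qmf (J := J) x
  have h2 : Os x = Os (qmf J x) := by
    conv_lhs => rw [← this]
    rw [map_add, h.hLp _ (plf_mem h x), zero_add]
  rw [h2]
  exact h.hLm _ (qmf_mem h x)

lemma Obf_mem_M (h : HSS C J Os) (x : ℂ ⊗[ℝ] E) : Obf Os x ∈ eigM (cext (A := A) J) :=
  conj_mem_M (Os_mem_L h (conjT E x))

lemma Obf_M_zero (h : HSS C J Os) {x : ℂ ⊗[ℝ] E} (hx : x ∈ eigM (cext (A := A) J)) :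
    Obf Os x = 0 := by
  rw [Obf, h.hLp _ (conj_mem_L hx), map_zero]

lemma hnd' (h : HSS C J Os) (e : ℂ ⊗[ℝ] E) : Os (Obf Os e) + Obf Os (Os e) = -e :=
  h.hnd e

lemma OsObf_L (h : HSS C J Os) {x : ℂ ⊗[ℝ] E} (hx : x ∈ eigP (cext (A := A) J)) :
    Os (Obf Os x) = -x := by
  have := hnd' h x
  rwa [h.hLp _ hx, Obf_zero, add_zero] at this

lemma ObfOs_M (h : HSS C J Os) {x : ℂ ⊗[ℝ] E} (hx : x ∈ eigM (cext (A := A) J)) :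
    Obf Os (Os x) = -x := by
  have := hnd' h x
  rwa [Obf_M_zero h hx, map_zero, zero_add] at this

lemma mem_L_of_Os (h : HSS C J Os) {x : ℂ ⊗[ℝ] E} (hx : Os x = 0) :
    x ∈ eigP (cext (A := A) J) := by
  have hq : Os (qmf J x) = 0 := by
    have := plf_add_qmf (J := J) x
    conv_lhs at hx => rw [← this]
    rwa [map_add, h.hLp _ (plf_mem h x), zero_add] at hx
  have h0 : qmf J x = 0 := by
    have := ObfOs_M h (qmf_mem h x)
    rw [hq, Obf_zero] at this
    simpa using this.symm
  have := plf_add_qmf (J := J) x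
  rw [h0, add_zero] at this
  rw [← this]; exact plf_mem h x

lemma mem_M_of_Obf (h : HSS C J Os) {x : ℂ ⊗[ℝ] E} (hx : Obf Os x = 0) :
    x ∈ eigM (cext (A := A) J) := by
  have hL : ∀ y ∈ eigP (cext (A := A) J), Obf Os y = 0 → y = 0 := by
    intro y hy hOy
    have := OsObf_L h hy
    rw [hOy, map_zero] at this
    simpa using this.symm
  have hp : Obf Os (plf J x) = 0 := by
    have heq : Obf Os (plf J x) + Obf Os (qmf J x) = Obf Os x := by
      rw [← Obf_add, plf_add_qmf]
    rwa [Obf_M_zero h (qmf_mem h x), add_zero, hx] at heq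
  have h0 : plf J x = 0 := hL _ (plf_mem h x) hp
  have := plf_add_qmf (J := J) x
  rw [h0, zero_add] at this
  rw [← this]; exact qmf_mem h x

lemma OsJ (h : HSS C J Os) (x : ℂ ⊗[ℝ] E) :
    Os (cext J x) = -(Complex.I • Os x) := by
  have hd := plf_add_qmf (J := J) x
  have h1 : Os x = Os (qmf J x) := by
    conv_lhs => rw [← hd]
    rw [map_add, h.hLp _ (plf_mem h x), zero_add]
  have h2 : cext J x = cext J (plf J x) + cext J (qmf J x) := by
    rw [← map_add, hd]
  rw [h2, map_add, (mem_L_iff _).mp (plf_mem h x), (mem_M_iff _).mp (qmf_mem h x),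
    map_smul, h.hLp _ (plf_mem h x), map_neg, map_smul, h1]
  simp

lemma ObfJ (h : HSS C J Os) (x : ℂ ⊗[ℝ] E) :
    Obf Os (cext J x) = Complex.I • Obf Os x := by
  rw [Obf, ← cextJ_conjT, OsJ h, map_neg, conjT_smul, Obf]
  simp

lemma JOs (h : HSS C J Os) (x : ℂ ⊗[ℝ] E) :
    cext J (Os x) = Complex.I • Os x := (mem_L_iff _).mp (Os_mem_L h x)

lemma JObf (h : HSS C J Os) (x : ℂ ⊗[ℝ] E) :
    cext J (Obf Os x) = -(Complex.I • Obf Os x) := (mem_M_iff _).mp (Obf_mem_M h x)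

lemma L_closed (h : HSS C J Os) {x y : ℂ ⊗[ℝ] E} (hx : x ∈ eigP (cext (A := A) J))
    (hy : y ∈ eigP (cext (A := A) J)) : C.bracC x y ∈ eigP (cext (A := A) J) := by
  have hn := NJJC C J h.hJ x y
  simp only [nijGen] at hn
  rw [(mem_L_iff x).mp hx, (mem_L_iff y).mp hy] at hn
  simp only [map_smul, LinearMap.smul_apply, cextJJ C J h.hJ] at hn
  simp only [smul_smul, Complex.I_mul_I, neg_one_smul] at hn
  have h5 : C.bracC x y + Complex.I • cext J (C.bracC x y) = 0 := by
    linear_combination (norm := module) (-1/4 : ℂ) • hn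
  have hIX : Complex.I • cext J (C.bracC x y) = -(C.bracC x y) := by
    linear_combination (norm := module) h5
  rw [mem_L_iff]
  calc cext J (C.bracC x y)
      = (-Complex.I) • (Complex.I • cext J (C.bracC x y)) := by
        rw [smul_smul, neg_mul, Complex.I_mul_I, neg_neg, one_smul]
    _ = (-Complex.I) • (-(C.bracC x y)) := by rw [hIX]
    _ = Complex.I • C.bracC x y := by rw [smul_neg, neg_smul, neg_neg]

lemma M_closed (h : HSS C J Os) {x y : ℂ ⊗[ℝ] E} (hx : x ∈ eigM (cext (A := A) J))
    (hy : y ∈ eigM (cext (A := A) J)) : C.bracC x y ∈ eigM (cext (A := A) J) := by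
  have : C.bracC x y = conjT E (C.bracC (conjT E x) (conjT E y)) := by
    rw [bracC_conj, conjT_conjT]
  rw [this]
  exact conj_mem_M (L_closed h (conj_mem_L hx) (conj_mem_L hy))

end Aux4
section Aux5

variable {A E : Type} [CommRing A] [Algebra ℝ A] [AddCommGroup E] [Module ℝ E]
    [Module A E] [IsScalarTower ℝ A E]
variable {C : CourantAlgebroid A E} {J : E →ₗ[A] E} {Os : ℂ ⊗[ℝ] E →ₗ[ℂ] ℂ ⊗[ℝ] E}

lemma S1 (C : CourantAlgebroid A E) (x y z : ℂ ⊗[ℝ] E) :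
    C.pairC (C.bracC x y) z = C.rhoC x (C.pairC y z) - C.pairC y (C.bracC x z) := by
  linear_combination (norm := module) -anchor_pairC C x y z

lemma S2 (C : CourantAlgebroid A E) (x y z : ℂ ⊗[ℝ] E) :
    C.pairC (C.bracC x y) z = C.rhoC z (C.pairC x y) - C.pairC (C.bracC y x) z := by
  have h1 := congrArg (fun w => C.pairC w z) (brac_add_swapC C x y)
  simp only [map_add, LinearMap.add_apply, map_smul, LinearMap.smul_apply,
    pair_DmC] at h1
  rw [smul_smul] at h1
  norm_num at h1
  linear_combination (norm := module) h1

lemma brac_antisym (C : CourantAlgebroid A E) {x y : ℂ ⊗[ℝ] E}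
    (hxy : C.pairC x y = 0) : C.bracC y x = -(C.bracC x y) := by
  have h1 := brac_add_swapC C x y
  rw [hxy, map_zero, smul_zero] at h1
  linear_combination (norm := module) h1

lemma skewOb (h : HSS C J Os) (x y : ℂ ⊗[ℝ] E) :
    C.pairC (Obf Os x) y = -C.pairC x (Obf Os y) := by
  have h1 : C.pairC (Obf Os x) y =
      C.pairC (Obf Os x) (conjT E (conjT E y)) := by rw [conjT_conjT]
  rw [h1, Obf, pairC_conj, h.hskew, map_neg, ← pairC_conj, conjT_conjT]
  rfl

lemma mem_M_add {x y : ℂ ⊗[ℝ] E} (hx : x ∈ eigM (cext (A := A) J))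
    (hy : y ∈ eigM (cext (A := A) J)) : x + y ∈ eigM (cext (A := A) J) := by
  rw [mem_M_iff, map_add, (mem_M_iff x).mp hx, (mem_M_iff y).mp hy, smul_add]
  abel

lemma mem_M_neg {x : ℂ ⊗[ℝ] E} (hx : x ∈ eigM (cext (A := A) J)) :
    -x ∈ eigM (cext (A := A) J) := by
  rw [mem_M_iff, map_neg, (mem_M_iff x).mp hx, smul_neg]

lemma mem_L_add {x y : ℂ ⊗[ℝ] E} (hx : x ∈ eigP (cext (A := A) J))
    (hy : y ∈ eigP (cext (A := A) J)) : x + y ∈ eigP (cext (A := A) J) := by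
  rw [mem_L_iff, map_add, (mem_L_iff x).mp hx, (mem_L_iff y).mp hy, smul_add]

lemma mem_L_neg {x : ℂ ⊗[ℝ] E} (hx : x ∈ eigP (cext (A := A) J)) :
    -x ∈ eigP (cext (A := A) J) := by
  rw [mem_L_iff, map_neg, (mem_L_iff x).mp hx, smul_neg]

lemma Obf_neg (x : ℂ ⊗[ℝ] E) : Obf Os (-x) = -Obf Os x := by
  simp [Obf, map_neg]

lemma zero_of_M (h : HSS C J Os) {X : ℂ ⊗[ℝ] E} (hX : X ∈ eigM (cext (A := A) J))
    (hp : ∀ ζ ∈ eigP (cext (A := A) J), C.pairC X ζ = 0) : X = 0 := by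
  apply pairC_nondeg C
  intro y
  have hd := plf_add_qmf (J := J) y
  rw [← hd, map_add]
  rw [hp _ (plf_mem h y), M_orth h hX (qmf_mem h y), add_zero]

lemma zero_of_L (h : HSS C J Os) {X : ℂ ⊗[ℝ] E} (hX : X ∈ eigP (cext (A := A) J))
    (hp : ∀ ζ ∈ eigM (cext (A := A) J), C.pairC X ζ = 0) : X = 0 := by
  apply pairC_nondeg C
  intro y
  have hd := plf_add_qmf (J := J) y
  rw [← hd, map_add]
  rw [hp _ (qmf_mem h y), L_orth h hX (plf_mem h y), zero_add]

/-- the scalar closedness identity on the minus-eigenspace -/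
lemma IM_scalar (h : HSS C J Os) {x y z : ℂ ⊗[ℝ] E}
    (hx : x ∈ eigM (cext (A := A) J)) (hy : y ∈ eigM (cext (A := A) J))
    (hz : z ∈ eigM (cext (A := A) J)) :
    C.pairC (C.bracC x (Os y)) z + C.pairC (C.bracC (Os x) y) z
      - C.pairC (Os (C.bracC x y)) z = 0 := by
  have hc := h.hclosed x y z hx hy hz
  have h1 : C.pairC (C.bracC x (Os y)) z =
      C.rhoC x (C.pairC (Os y) z) + C.pairC (Os (C.bracC x z)) y := by
    have e1 := S1 C x (Os y) z
    have e2 : C.pairC (Os y) (C.bracC x z) = C.pairC (C.bracC x z) (Os y) :=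
      pairC_symm C _ _
    have e3 : C.pairC (Os (C.bracC x z)) y = -C.pairC (C.bracC x z) (Os y) :=
      h.hskew _ _
    linear_combination (norm := module) e1 - e2 - e3
  have h2 : C.pairC (C.bracC (Os x) y) z =
      C.rhoC z (C.pairC (Os x) y) - C.rhoC y (C.pairC (Os x) z)
        - C.pairC (Os (C.bracC y z)) x := by
    have e1 := S2 C (Os x) y z
    have e2 := S1 C y (Os x) z
    have e3 : C.pairC (Os x) (C.bracC y z) = C.pairC (C.bracC y z) (Os x) :=
      pairC_symm C _ _
    have e4 : C.pairC (Os (C.bracC y z)) x = -C.pairC (C.bracC y z) (Os x) :=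
      h.hskew _ _
    linear_combination (norm := module) e1 - e2 + e3 + e4
  linear_combination (norm := module) h1 + h2 + hc

/-- P1 on the minus-eigenspace -/
lemma P1M (h : HSS C J Os) {x y : ℂ ⊗[ℝ] E}
    (hx : x ∈ eigM (cext (A := A) J)) (hy : y ∈ eigM (cext (A := A) J)) :
    Obf Os (C.bracC x (Os y)) + Obf Os (C.bracC (Os x) y) = -(C.bracC x y) := by
  have hmem : Obf Os (C.bracC x (Os y)) + Obf Os (C.bracC (Os x) y)
      + C.bracC x y ∈ eigM (cext (A := A) J) :=
    mem_M_add (mem_M_add (Obf_mem_M h _) (Obf_mem_M h _)) (M_closed h hx hy)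
  have hz : Obf Os (C.bracC x (Os y)) + Obf Os (C.bracC (Os x) y)
      + C.bracC x y = 0 := by
    apply zero_of_M h hmem
    intro ζ hζ
    -- reparametrise ζ = Os σ with σ ∈ M
    have hσM : -(Obf Os ζ) ∈ eigM (cext (A := A) J) := mem_M_neg (Obf_mem_M h ζ)
    set σ := -(Obf Os ζ) with hσ
    have hζσ : Os σ = ζ := by
      rw [hσ, map_neg, OsObf_L h hζ, neg_neg]
    have e0 : ∀ w : ℂ ⊗[ℝ] E, C.pairC (Obf Os w) (Os σ) = C.pairC w σ := by
      intro w
      rw [skewOb h, ObfOs_M h hσM]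
      simp [map_neg]
    have e1 : C.pairC (C.bracC x y) (Os σ) = -C.pairC (Os (C.bracC x y)) σ := by
      have := h.hskew (C.bracC x y) σ
      have h2 : C.pairC (C.bracC x y) (Os σ) = C.pairC (Os σ) (C.bracC x y) :=
        pairC_symm C _ _
      have h3 : C.pairC (Os σ) (C.bracC x y) = -C.pairC σ (Os (C.bracC x y)) :=
        h.hskew _ _
      have h4 : C.pairC σ (Os (C.bracC x y)) = C.pairC (Os (C.bracC x y)) σ :=
        pairC_symm C _ _
      linear_combination (norm := module) h2 + h3 - h4
    simp only [map_add, LinearMap.add_apply]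
    rw [← hζσ, e0, e0, e1]
    have := IM_scalar h hx hy hσM
    linear_combination (norm := module) this
  linear_combination (norm := module) hz

end Aux5
section Aux5b

variable {A E : Type} [CommRing A] [Algebra ℝ A] [AddCommGroup E] [Module ℝ E]
    [Module A E] [IsScalarTower ℝ A E]
variable {C : CourantAlgebroid A E} {J : E →ₗ[A] E} {Os : ℂ ⊗[ℝ] E →ₗ[ℂ] ℂ ⊗[ℝ] E}

lemma conj_brac (C : CourantAlgebroid A E) (a b : ℂ ⊗[ℝ] E) :
    conjT E (C.bracC a b) = C.bracC (conjT E a) (conjT E b) := by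
  exact (bracC_conj C a b).symm

/-- P1 on the plus-eigenspace -/
lemma P1L (h : HSS C J Os) {x y : ℂ ⊗[ℝ] E}
    (hx : x ∈ eigP (cext (A := A) J)) (hy : y ∈ eigP (cext (A := A) J)) :
    Os (C.bracC x (Obf Os y)) + Os (C.bracC (Obf Os x) y) = -(C.bracC x y) := by
  have hM := P1M h (conj_mem_M hx) (conj_mem_M hy)
  have h2 := congrArg (conjT E) hM
  simp only [map_add, map_neg] at h2
  simp only [conj_Obf] at h2
  simp only [conj_brac] at h2
  simp only [conjT_conjT] at h2
  exact h2

/-- P2 on the plus-eigenspace -/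
lemma P2L (h : HSS C J Os) {x y : ℂ ⊗[ℝ] E}
    (hx : x ∈ eigP (cext (A := A) J)) (hy : y ∈ eigP (cext (A := A) J)) :
    Obf Os (C.bracC x (Obf Os y)) + Obf Os (C.bracC (Obf Os x) y)
      = C.bracC (Obf Os x) (Obf Os y) := by
  have hαM := Obf_mem_M (Os := Os) h x
  have hβM := Obf_mem_M (Os := Os) h y
  have hmem : Obf Os (C.bracC x (Obf Os y)) + Obf Os (C.bracC (Obf Os x) y)
      + -(C.bracC (Obf Os x) (Obf Os y)) ∈ eigM (cext (A := A) J) :=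
    mem_M_add (mem_M_add (Obf_mem_M h _) (Obf_mem_M h _))
      (mem_M_neg (M_closed h hαM hβM))
  have hz : Obf Os (C.bracC x (Obf Os y)) + Obf Os (C.bracC (Obf Os x) y)
      + -(C.bracC (Obf Os x) (Obf Os y)) = 0 := by
    apply zero_of_M h hmem
    intro ζ hζ
    have hγM := Obf_mem_M (Os := Os) h ζ
    have hOsα : Os (Obf Os x) = -x := OsObf_L h hx
    have hOsβ : Os (Obf Os y) = -y := OsObf_L h hy
    have hOsγ : Os (Obf Os ζ) = -ζ := OsObf_L h hζ
    have hβγ : C.pairC (Obf Os y) (Obf Os ζ) = 0 := M_orth h hβM hγM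
    have hαγ : C.pairC (Obf Os x) (Obf Os ζ) = 0 := M_orth h hαM hγM
    -- abbreviations
    set α := Obf Os x with hα
    set β := Obf Os y with hβ
    set γ := Obf Os ζ with hγdef
    have hc := h.hclosed α β γ hαM hβM hγM
    simp only [hOsα, hOsβ, hOsγ, map_neg, LinearMap.neg_apply] at hc
    have eA : C.pairC (Os (C.bracC α β)) γ = C.pairC (C.bracC α β) ζ := by
      rw [h.hskew, hOsγ]; simp [map_neg]
    have eB : C.pairC (Os (C.bracC α γ)) β = C.pairC (C.bracC α γ) y := by
      rw [h.hskew, hOsβ]; simp [map_neg]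
    have eC : C.pairC (Os (C.bracC β γ)) α = C.pairC (C.bracC β γ) x := by
      rw [h.hskew, hOsα]; simp [map_neg]
    -- t2 : ⟨x∘β, γ⟩
    have k1 : C.rhoC x (C.pairC β γ) = 0 := by rw [hβγ, map_zero]
    have u1 := S1 C x β γ
    have u2 : C.pairC β (C.bracC x γ) = C.pairC (C.bracC x γ) β := pairC_symm C _ _
    have u3 := S2 C x γ β
    have u4 := S1 C γ x β
    have u5 : C.bracC γ β = -(C.bracC β γ) := brac_antisym C hβγ
    have u6 : C.pairC x (C.bracC γ β) = -(C.pairC (C.bracC β γ) x) := by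
      rw [u5, map_neg]
      exact congrArg Neg.neg (pairC_symm C _ _)
    have uR : C.rhoC γ (C.pairC x β) = C.rhoC γ (C.pairC β x) :=
      congrArg _ (pairC_symm C _ _)
    have t2 : C.pairC (C.bracC x β) γ =
        -(C.rhoC β (C.pairC x γ)) + C.rhoC γ (C.pairC β x)
          + C.pairC (C.bracC β γ) x := by
      linear_combination (norm := module) u1 - u2 - u3 + u4 - u6 + uR + k1
    -- t3 : ⟨α∘y, γ⟩
    have k2 : C.rhoC y (C.pairC α γ) = 0 := by rw [hαγ, map_zero]
    have v1 := S2 C α y γ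
    have v2 := S1 C y α γ
    have v3 : C.pairC α (C.bracC y γ) = C.pairC (C.bracC y γ) α := pairC_symm C _ _
    have v4 := S2 C y γ α
    have v5 := S1 C γ y α
    have v6 : C.bracC γ α = -(C.bracC α γ) := brac_antisym C hαγ
    have v7 : C.pairC y (C.bracC γ α) = -(C.pairC (C.bracC α γ) y) := by
      rw [v6, map_neg]
      exact congrArg Neg.neg (pairC_symm C _ _)
    have v8 : C.rhoC γ (C.pairC α y) = C.rhoC γ (C.pairC y α) :=
      congrArg _ (pairC_symm C _ _)
    have t3 : C.pairC (C.bracC α y) γ =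
        C.rhoC α (C.pairC y γ) - C.pairC (C.bracC α γ) y := by
      linear_combination (norm := module) v1 - v2 - k2 + v3 + v4 - v5 + v7 + v8
    -- assemble
    have w8 : C.rhoC γ (C.pairC β x) = C.rhoC γ (C.pairC x β) :=
      congrArg _ (pairC_symm C _ _)
    simp only [map_add, LinearMap.add_apply, LinearMap.neg_apply, map_neg]
    rw [skewOb h, skewOb h]
    linear_combination (norm := module) -t2 - t3 + hc - w8 + eA - eB + eC
  linear_combination (norm := module) hz

/-- the mixed bracket identity -/
lemma MIX (h : HSS C J Os) {x y : ℂ ⊗[ℝ] E}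
    (hx : x ∈ eigP (cext (A := A) J)) (hy : y ∈ eigM (cext (A := A) J)) :
    C.bracC (Obf Os x) (Os y) - Obf Os (C.bracC x (Os y))
      - Os (C.bracC (Obf Os x) y) - C.bracC x y = 0 := by
  have hμ : Os y ∈ eigP (cext (A := A) J) := Os_mem_L h y
  have hy2 : y = -(Obf Os (Os y)) := by
    have := ObfOs_M h hy
    linear_combination (norm := module) this
  have f1 := P2L h hx hμ
  have f2 := P1L h hx hμ
  have f3 := hnd' h (C.bracC x (Obf Os (Os y)))
  have f4 := hnd' h (C.bracC (Obf Os x) (Os y))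
  -- Os (br α (Obf μ)) where μ = Os y : from f1 and hnd'
  have g1 : Os (C.bracC (Obf Os x) (Obf Os (Os y))) =
      -(C.bracC x (Obf Os (Os y))) - C.bracC (Obf Os x) (Os y)
        + Obf Os (C.bracC x (Os y)) := by
    have := congrArg Os f1
    rw [map_add] at this
    have h5 := congrArg (Obf Os) f2
    rw [Obf_add] at h5
    have h6 : Obf Os (-(C.bracC x (Os y))) = -(Obf Os (C.bracC x (Os y))) :=
      Obf_neg _
    linear_combination (norm := module) -this + f3 + f4 - h5 - h6
  have e3 : Os (C.bracC (Obf Os x) y) =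
      -(Os (C.bracC (Obf Os x) (Obf Os (Os y)))) := by
    conv_lhs => rw [hy2]
    rw [map_neg, map_neg]
  have e4 : C.bracC x y = -(C.bracC x (Obf Os (Os y))) := by
    conv_lhs => rw [hy2]
    rw [map_neg]
  linear_combination (norm := module) -e3 - e4 + g1
end Aux5b
section Aux6

variable {A E : Type} [CommRing A] [Algebra ℝ A] [AddCommGroup E] [Module ℝ E]
    [Module A E] [IsScalarTower ℝ A E]
variable {C : CourantAlgebroid A E} {J : E →ₗ[A] E} {Os : ℂ ⊗[ℝ] E →ₗ[ℂ] ℂ ⊗[ℝ] E}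

lemma NFG_LL (h : HSS C J Os) (a₁ b₁ a₂ b₂ : ℂ) {x y : ℂ ⊗[ℝ] E}
    (hx : x ∈ eigP (cext (A := A) J)) (hy : y ∈ eigP (cext (A := A) J)) :
    nijGen (fun u v => C.bracC u v) (fun u => a₁ • Os u + b₁ • Obf Os u)
      (fun u => a₂ • Os u + b₂ • Obf Os u) x y = 0 := by
  have hOsx : Os x = 0 := h.hLp x hx
  have hOsy : Os y = 0 := h.hLp y hy
  have hwL : C.bracC x y ∈ eigP (cext (A := A) J) := L_closed h hx hy
  have hOsw : Os (C.bracC x y) = 0 := h.hLp _ hwL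
  have hOOw : Os (Obf Os (C.bracC x y)) = -(C.bracC x y) := OsObf_L h hwL
  have hObfObfw : Obf Os (Obf Os (C.bracC x y)) = 0 := Obf_M_zero h (Obf_mem_M h _)
  have hp1 := P1L h hx hy
  have hp2 := P2L h hx hy
  simp only [nijGen, map_add, map_smul, LinearMap.add_apply, LinearMap.smul_apply,
    Obf_add, Obf_smul, hOsx, hOsy, hOsw, map_zero, LinearMap.zero_apply, Obf_zero,
    smul_zero, zero_add, add_zero, hOOw, hObfObfw]
  linear_combination (norm := module) (-(a₁*b₂) - a₂*b₁) • hp1 - (2*b₁*b₂) • hp2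

lemma NFG_LM (h : HSS C J Os) (a₁ b₁ a₂ b₂ : ℂ) {x y : ℂ ⊗[ℝ] E}
    (hx : x ∈ eigP (cext (A := A) J)) (hy : y ∈ eigM (cext (A := A) J)) :
    nijGen (fun u v => C.bracC u v) (fun u => a₁ • Os u + b₁ • Obf Os u)
      (fun u => a₂ • Os u + b₂ • Obf Os u) x y = 0 := by
  have hOsx : Os x = 0 := h.hLp x hx
  have hOby : Obf Os y = 0 := Obf_M_zero h hy
  have hy'L : C.bracC x (Os y) ∈ eigP (cext (A := A) J) :=
    L_closed h hx (Os_mem_L h y)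
  have hOsy' : Os (C.bracC x (Os y)) = 0 := h.hLp _ hy'L
  have hzM : C.bracC (Obf Os x) y ∈ eigM (cext (A := A) J) :=
    M_closed h (Obf_mem_M h x) hy
  have hObz : Obf Os (C.bracC (Obf Os x) y) = 0 := Obf_M_zero h hzM
  have hOsOsw : Os (Os (C.bracC x y)) = 0 := h.hLp _ (Os_mem_L h _)
  have hObfObfw : Obf Os (Obf Os (C.bracC x y)) = 0 := Obf_M_zero h (Obf_mem_M h _)
  have hndw := hnd' h (C.bracC x y)
  have Mx := MIX h hx hy
  simp only [nijGen, map_add, map_smul, LinearMap.add_apply, LinearMap.smul_apply,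
    Obf_add, Obf_smul, hOsx, hOby, hOsy', hObz, hOsOsw, hObfObfw, map_zero,
    LinearMap.zero_apply, Obf_zero, smul_zero, zero_add, add_zero]
  linear_combination (norm := module) (a₁*b₂ + a₂*b₁) • Mx + (a₁*b₂ + a₂*b₁) • hndw

lemma NFJ_LL (h : HSS C J Os) (a₁ b₁ : ℂ) {x y : ℂ ⊗[ℝ] E}
    (hx : x ∈ eigP (cext (A := A) J)) (hy : y ∈ eigP (cext (A := A) J)) :
    nijGen (fun u v => C.bracC u v) (fun u => a₁ • Os u + b₁ • Obf Os u)
      (fun u => cext J u) x y = 0 := by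
  have hOsx : Os x = 0 := h.hLp x hx
  have hOsy : Os y = 0 := h.hLp y hy
  have hJx : cext J x = Complex.I • x := (mem_L_iff x).mp hx
  have hJy : cext J y = Complex.I • y := (mem_L_iff y).mp hy
  have hwL : C.bracC x y ∈ eigP (cext (A := A) J) := L_closed h hx hy
  have hOsw : Os (C.bracC x y) = 0 := h.hLp _ hwL
  have hJw : cext J (C.bracC x y) = Complex.I • C.bracC x y := (mem_L_iff _).mp hwL
  have hJObfw := JObf h (C.bracC x y)
  -- the element u = x₁ + x₂ - Obf w lies in L
  have huL : C.bracC x (Obf Os y) + C.bracC (Obf Os x) y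
      - Obf Os (C.bracC x y) ∈ eigP (cext (A := A) J) := by
    apply mem_L_of_Os h
    rw [map_sub, map_add, OsObf_L h hwL]
    have hp1 := P1L h hx hy
    linear_combination (norm := module) hp1
  have hJu := (mem_L_iff _).mp huL
  rw [map_sub, map_add] at hJu
  simp only [nijGen, map_add, map_smul, LinearMap.add_apply, LinearMap.smul_apply,
    Obf_add, Obf_smul, hOsx, hOsy, hOsw, map_zero, LinearMap.zero_apply, Obf_zero,
    smul_zero, zero_add, add_zero, hJx, hJy, hJw]
  linear_combination (norm := module) (-b₁) • hJu

lemma NFJ_LM (h : HSS C J Os) (a₁ b₁ : ℂ) {x y : ℂ ⊗[ℝ] E}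
    (hx : x ∈ eigP (cext (A := A) J)) (hy : y ∈ eigM (cext (A := A) J)) :
    nijGen (fun u v => C.bracC u v) (fun u => a₁ • Os u + b₁ • Obf Os u)
      (fun u => cext J u) x y = 0 := by
  have hOsx : Os x = 0 := h.hLp x hx
  have hOby : Obf Os y = 0 := Obf_M_zero h hy
  have hJx : cext J x = Complex.I • x := (mem_L_iff x).mp hx
  have hJy : cext J y = -(Complex.I • y) := (mem_M_iff y).mp hy
  have hy'L : C.bracC x (Os y) ∈ eigP (cext (A := A) J) :=
    L_closed h hx (Os_mem_L h y)
  have hJy' : cext J (C.bracC x (Os y)) = Complex.I • C.bracC x (Os y) :=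
    (mem_L_iff _).mp hy'L
  have hzM : C.bracC (Obf Os x) y ∈ eigM (cext (A := A) J) :=
    M_closed h (Obf_mem_M h x) hy
  have hJz : cext J (C.bracC (Obf Os x) y) = -(Complex.I • C.bracC (Obf Os x) y) :=
    (mem_M_iff _).mp hzM
  simp only [nijGen, map_add, map_smul, LinearMap.add_apply, LinearMap.smul_apply,
    Obf_add, Obf_smul, map_neg, Obf_neg, smul_neg,
    hOsx, hOby, map_zero, LinearMap.zero_apply, Obf_zero,
    smul_zero, zero_add, add_zero, hJx, hJy, hJy', hJz, OsJ h, ObfJ h, JOs h, JObf h]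
  module

lemma nij_conjt (F G : ℂ ⊗[ℝ] E → ℂ ⊗[ℝ] E)
    (hFc : ∀ x, F (conjT E x) = conjT E (F x)) (hGc : ∀ x, G (conjT E x) = conjT E (G x))
    (U V : ℂ ⊗[ℝ] E) :
    nijGen (fun a b => C.bracC a b) F G (conjT E U) (conjT E V) =
      conjT E (nijGen (fun a b => C.bracC a b) F G U V) := by
  simp only [nijGen, map_sub, map_add, conj_brac, ← hFc, ← hGc]

lemma nij_all (h : HSS C J Os) (F G : ℂ ⊗[ℝ] E → ℂ ⊗[ℝ] E)
    (hFadd : ∀ a b, F (a + b) = F a + F b) (hGadd : ∀ a b, G (a + b) = G a + G b)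
    (hFc : ∀ x, F (conjT E x) = conjT E (F x)) (hGc : ∀ x, G (conjT E x) = conjT E (G x))
    (hLL : ∀ {x y : ℂ ⊗[ℝ] E}, x ∈ eigP (cext (A := A) J) → y ∈ eigP (cext (A := A) J) →
      nijGen (fun a b => C.bracC a b) F G x y = 0)
    (hLM : ∀ {x y : ℂ ⊗[ℝ] E}, x ∈ eigP (cext (A := A) J) → y ∈ eigM (cext (A := A) J) →
      nijGen (fun a b => C.bracC a b) F G x y = 0)
    (U V : ℂ ⊗[ℝ] E) :
    nijGen (fun a b => C.bracC a b) F G U V = 0 := by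
  have hbl : ∀ (x y z : ℂ ⊗[ℝ] E), C.bracC (x + y) z = C.bracC x z + C.bracC y z := by
    intro x y z; simp [map_add]
  have hbr : ∀ (x y z : ℂ ⊗[ℝ] E), C.bracC x (y + z) = C.bracC x y + C.bracC x z := by
    intro x y z; simp [map_add]
  have hML : ∀ {x y : ℂ ⊗[ℝ] E}, x ∈ eigM (cext (A := A) J) →
      y ∈ eigP (cext (A := A) J) → nijGen (fun a b => C.bracC a b) F G x y = 0 := by
    intro x y hx hy
    have hx' : x = conjT E (conjT E x) := (conjT_conjT x).symm
    have hy' : y = conjT E (conjT E y) := (conjT_conjT y).symm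
    rw [hx', hy', nij_conjt F G hFc hGc, hLM (conj_mem_L hx) (conj_mem_M hy), map_zero]
  have hMM : ∀ {x y : ℂ ⊗[ℝ] E}, x ∈ eigM (cext (A := A) J) →
      y ∈ eigM (cext (A := A) J) → nijGen (fun a b => C.bracC a b) F G x y = 0 := by
    intro x y hx hy
    have hx' : x = conjT E (conjT E x) := (conjT_conjT x).symm
    have hy' : y = conjT E (conjT E y) := (conjT_conjT y).symm
    rw [hx', hy', nij_conjt F G hFc hGc, hLL (conj_mem_L hx) (conj_mem_L hy), map_zero]
  have hU := plf_add_qmf (J := J) U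
  have hV := plf_add_qmf (J := J) V
  conv_lhs => rw [← hU, ← hV]
  rw [nijGen_addl _ hbl hbr F G hFadd hGadd,
    nijGen_addr _ hbl hbr F G hFadd hGadd, nijGen_addr _ hbl hbr F G hFadd hGadd]
  rw [hLL (plf_mem h U) (plf_mem h V), hLM (plf_mem h U) (qmf_mem h V),
    hML (qmf_mem h U) (plf_mem h V), hMM (qmf_mem h U) (qmf_mem h V)]
  simp

end Aux6
section Aux7

variable {A E : Type} [CommRing A] [Algebra ℝ A] [AddCommGroup E] [Module ℝ E]
    [Module A E] [IsScalarTower ℝ A E]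
variable {C : CourantAlgebroid A E} {J : E →ₗ[A] E} {Os : ℂ ⊗[ℝ] E →ₗ[ℂ] ℂ ⊗[ℝ] E}

lemma paramF_add (a b : ℂ) (x y : ℂ ⊗[ℝ] E) :
    (fun u => a • Os u + b • Obf Os u) (x + y) =
      (fun u => a • Os u + b • Obf Os u) x + (fun u => a • Os u + b • Obf Os u) y := by
  simp only [map_add, Obf_add]
  module

lemma paramI_conj (x : ℂ ⊗[ℝ] E) :
    (fun u => (1:ℂ) • Os u + (1:ℂ) • Obf Os u) (conjT E x) =
      conjT E ((fun u => (1:ℂ) • Os u + (1:ℂ) • Obf Os u) x) := by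
  simp only
  rw [map_add, conjT_smul, conjT_smul, conj_Os, conj_Obf]
  simp only [map_one]
  module

lemma paramK_conj (x : ℂ ⊗[ℝ] E) :
    (fun u => (-Complex.I) • Os u + Complex.I • Obf Os u) (conjT E x) =
      conjT E ((fun u => (-Complex.I) • Os u + Complex.I • Obf Os u) x) := by
  simp only
  rw [map_add, conjT_smul, conjT_smul, conj_Os, conj_Obf]
  simp only [map_neg, Complex.conj_I]
  module

lemma NII (h : HSS C J Os) (U V : ℂ ⊗[ℝ] E) :
    nijGen (fun a b => C.bracC a b) (fun u => (1:ℂ) • Os u + (1:ℂ) • Obf Os u)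
      (fun u => (1:ℂ) • Os u + (1:ℂ) • Obf Os u) U V = 0 :=
  nij_all h _ _ (paramF_add 1 1) (paramF_add 1 1) paramI_conj paramI_conj
    (fun hx hy => NFG_LL h 1 1 1 1 hx hy) (fun hx hy => NFG_LM h 1 1 1 1 hx hy) U V

lemma NIK (h : HSS C J Os) (U V : ℂ ⊗[ℝ] E) :
    nijGen (fun a b => C.bracC a b) (fun u => (1:ℂ) • Os u + (1:ℂ) • Obf Os u)
      (fun u => (-Complex.I) • Os u + Complex.I • Obf Os u) U V = 0 :=
  nij_all h _ _ (paramF_add 1 1) (paramF_add (-Complex.I) Complex.I) paramI_conj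
    paramK_conj (fun hx hy => NFG_LL h 1 1 (-Complex.I) Complex.I hx hy)
    (fun hx hy => NFG_LM h 1 1 (-Complex.I) Complex.I hx hy) U V

lemma NKK (h : HSS C J Os) (U V : ℂ ⊗[ℝ] E) :
    nijGen (fun a b => C.bracC a b) (fun u => (-Complex.I) • Os u + Complex.I • Obf Os u)
      (fun u => (-Complex.I) • Os u + Complex.I • Obf Os u) U V = 0 :=
  nij_all h _ _ (paramF_add (-Complex.I) Complex.I) (paramF_add (-Complex.I) Complex.I)
    paramK_conj paramK_conj
    (fun hx hy => NFG_LL h (-Complex.I) Complex.I (-Complex.I) Complex.I hx hy)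
    (fun hx hy => NFG_LM h (-Complex.I) Complex.I (-Complex.I) Complex.I hx hy) U V

lemma NIJ (h : HSS C J Os) (U V : ℂ ⊗[ℝ] E) :
    nijGen (fun a b => C.bracC a b) (fun u => (1:ℂ) • Os u + (1:ℂ) • Obf Os u)
      (fun u => cext J u) U V = 0 :=
  nij_all h _ _ (paramF_add 1 1) (fun a b => map_add (cext J) a b) paramI_conj
    (fun x => cextJ_conjT J x)
    (fun hx hy => NFJ_LL h 1 1 hx hy) (fun hx hy => NFJ_LM h 1 1 hx hy) U V

lemma NKJ (h : HSS C J Os) (U V : ℂ ⊗[ℝ] E) :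
    nijGen (fun a b => C.bracC a b) (fun u => (-Complex.I) • Os u + Complex.I • Obf Os u)
      (fun u => cext J u) U V = 0 :=
  nij_all h _ _ (paramF_add (-Complex.I) Complex.I) (fun a b => map_add (cext J) a b)
    paramK_conj (fun x => cextJ_conjT J x)
    (fun hx hy => NFJ_LL h (-Complex.I) Complex.I hx hy)
    (fun hx hy => NFJ_LM h (-Complex.I) Complex.I hx hy) U V

lemma Ifun_eq :
    (fun x : ℂ ⊗[ℝ] E => Os x + conjT E (Os (conjT E x))) =
      fun u => (1:ℂ) • Os u + (1:ℂ) • Obf Os u := by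
  funext u
  simp [Obf]

lemma Kfun_eq :
    (fun x : ℂ ⊗[ℝ] E => (-Complex.I) • (Os x - conjT E (Os (conjT E x)))) =
      fun u => (-Complex.I) • Os u + Complex.I • Obf Os u := by
  funext u
  show (-Complex.I) • (Os u - Obf Os u) = _
  module

end Aux7
theorem stmt14 {A E : Type} [CommRing A] [Algebra ℝ A] [AddCommGroup E] [Module ℝ E]
    [Module A E] [IsScalarTower ℝ A E] (C : CourantAlgebroid A E) (J : E →ₗ[A] E)
    (hJ : C.IsComplexStr J) (Os : ℂ ⊗[ℝ] E →ₗ[ℂ] ℂ ⊗[ℝ] E)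
    (hskew : ∀ ξ η : ℂ ⊗[ℝ] E, C.pairC (Os ξ) η = -C.pairC ξ (Os η))
    (hLp : ∀ e ∈ eigP (cext (A := A) (E := E) J), Os e = 0)
    (hLm : ∀ e ∈ eigM (cext (A := A) (E := E) J), Os e ∈ eigP (cext (A := A) (E := E) J))
    (hnd : ∀ e : ℂ ⊗[ℝ] E,
      Os (conjT E (Os (conjT E e))) + conjT E (Os (conjT E (Os e))) = -e)
    (hclosed : ∀ ξ η ζ : ℂ ⊗[ℝ] E,
      ξ ∈ eigM (cext (A := A) (E := E) J) → η ∈ eigM (cext (A := A) (E := E) J) →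
      ζ ∈ eigM (cext (A := A) (E := E) J) →
      C.rhoC ξ (C.pairC (Os η) ζ) - C.rhoC η (C.pairC (Os ξ) ζ)
        + C.rhoC ζ (C.pairC (Os ξ) η) - C.pairC (Os (C.bracC ξ η)) ζ
        + C.pairC (Os (C.bracC ξ ζ)) η - C.pairC (Os (C.bracC η ζ)) ξ = 0) :
    (∀ e : ℂ ⊗[ℝ] E,
      (Os (conjT E e) + conjT E (Os (conjT E (conjT E e)))) =
        conjT E (Os e + conjT E (Os (conjT E e)))) ∧
    (∀ e : ℂ ⊗[ℝ] E,
      (-Complex.I) • (Os (conjT E e) - conjT E (Os (conjT E (conjT E e)))) =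
        conjT E ((-Complex.I) • (Os e - conjT E (Os (conjT E e))))) ∧
    (∀ e : ℂ ⊗[ℝ] E,
      (fun x => Os x + conjT E (Os (conjT E x)))
        ((fun x => Os x + conjT E (Os (conjT E x))) e) = -e) ∧
    (∀ e : ℂ ⊗[ℝ] E, cext J (cext J e) = -e) ∧
    (∀ e : ℂ ⊗[ℝ] E,
      (fun x => (-Complex.I) • (Os x - conjT E (Os (conjT E x))))
        ((fun x => (-Complex.I) • (Os x - conjT E (Os (conjT E x)))) e) = -e) ∧
    (∀ e : ℂ ⊗[ℝ] E,
      (fun x => Os x + conjT E (Os (conjT E x)))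
        (cext J ((fun x => (-Complex.I) • (Os x - conjT E (Os (conjT E x)))) e)) = -e) ∧
    (∀ U V : ℂ ⊗[ℝ] E,
      C.pairC ((fun x => Os x + conjT E (Os (conjT E x))) U)
          ((fun x => Os x + conjT E (Os (conjT E x))) V) = C.pairC U V) ∧
    (∀ U V : ℂ ⊗[ℝ] E, C.pairC (cext (A := A) J U) (cext (A := A) J V) = C.pairC U V) ∧
    (∀ U V : ℂ ⊗[ℝ] E,
      C.pairC ((fun x => (-Complex.I) • (Os x - conjT E (Os (conjT E x)))) U)
          ((fun x => (-Complex.I) • (Os x - conjT E (Os (conjT E x)))) V) = C.pairC U V) ∧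
    (∀ F G : (ℂ ⊗[ℝ] E) → ℂ ⊗[ℝ] E,
      F ∈ ({fun x => Os x + conjT E (Os (conjT E x)),
            fun x => (cext J : (ℂ ⊗[ℝ] E) →ₗ[ℂ] ℂ ⊗[ℝ] E) x,
            fun x => (-Complex.I) • (Os x - conjT E (Os (conjT E x)))} :
          Set ((ℂ ⊗[ℝ] E) → ℂ ⊗[ℝ] E)) →
      G ∈ ({fun x => Os x + conjT E (Os (conjT E x)),
            fun x => (cext J : (ℂ ⊗[ℝ] E) →ₗ[ℂ] ℂ ⊗[ℝ] E) x,
            fun x => (-Complex.I) • (Os x - conjT E (Os (conjT E x)))} :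
          Set ((ℂ ⊗[ℝ] E) → ℂ ⊗[ℝ] E)) →
      ∀ U V : ℂ ⊗[ℝ] E, nijGen (fun x y => C.bracC x y) F G U V = 0) := by
  have h : HSS C J Os := ⟨hJ, hskew, hLp, hLm, hnd, hclosed⟩
  have hII : ∀ e : ℂ ⊗[ℝ] E, Os (Os e + Obf Os e) + Obf Os (Os e + Obf Os e) = -e := by
    intro e
    have e1 : Os (Os e) = 0 := h.hLp _ (Os_mem_L h _)
    have e2 : Obf Os (Obf Os e) = 0 := Obf_M_zero h (Obf_mem_M h _)
    rw [map_add, Obf_add, e1, e2, zero_add, add_zero]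
    exact hnd' h e
  refine ⟨?_, ?_, ?_, ?_, ?_, ?_, ?_, ?_, ?_, ?_⟩
  · -- I conj-equivariant
    intro e
    rw [conjT_conjT, map_add, conjT_conjT]
    abel
  · -- K conj-equivariant
    intro e
    rw [conjT_conjT, conjT_smul, map_sub, conjT_conjT]
    simp only [map_neg, Complex.conj_I]
    module
  · -- I ∘ I = -1
    intro e
    exact hII e
  · -- J ∘ J = -1
    intro e
    exact cextJJ C J hJ e
  · -- K ∘ K = -1
    intro e
    have e1 : Os (Os e) = 0 := h.hLp _ (Os_mem_L h _)
    have e2 : Obf Os (Obf Os e) = 0 := Obf_M_zero h (Obf_mem_M h _)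
    show (-Complex.I) • (Os ((-Complex.I) • (Os e - Obf Os e))
      - Obf Os ((-Complex.I) • (Os e - Obf Os e))) = -e
    have hOsK : Os ((-Complex.I) • (Os e - Obf Os e)) = Complex.I • Os (Obf Os e) := by
      rw [map_smul, map_sub, e1, zero_sub, smul_neg, neg_smul, neg_neg]
    have hObK : Obf Os ((-Complex.I) • (Os e - Obf Os e)) =
        (-Complex.I) • Obf Os (Os e) := by
      rw [Obf_smul, Obf_sub, e2, sub_zero]
    rw [hOsK, hObK, smul_sub, smul_smul, smul_smul, neg_mul, Complex.I_mul_I, neg_neg,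
      one_smul, neg_mul_neg, Complex.I_mul_I, neg_one_smul, sub_neg_eq_add]
    exact hnd' h e
  · -- I J K = -1
    intro e
    have hstep : cext J ((-Complex.I) • (Os e - conjT E (Os (conjT E e)))) =
        Os e + Obf Os e := by
      show cext J ((-Complex.I) • (Os e - Obf Os e)) = _
      rw [map_smul, map_sub, JOs h, JObf h, sub_neg_eq_add, ← smul_add, smul_smul,
        neg_mul, Complex.I_mul_I, neg_neg, one_smul]
    rw [hstep]
    exact hII e
  · -- I orthogonal
    intro U V
    show C.pairC (Os U + Obf Os U) (Os V + Obf Os V) = C.pairC U V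
    have o1 : C.pairC (Os U) (Os V) = 0 := L_orth h (Os_mem_L h U) (Os_mem_L h V)
    have o2 : C.pairC (Obf Os U) (Obf Os V) = 0 :=
      M_orth h (Obf_mem_M h U) (Obf_mem_M h V)
    have c1 : C.pairC (Os U) (Obf Os V) = -C.pairC U (Os (Obf Os V)) := h.hskew _ _
    have c2 : C.pairC (Obf Os U) (Os V) = -C.pairC U (Obf Os (Os V)) := skewOb h _ _
    have c3 := congrArg (C.pairC U) (hnd' h V)
    rw [map_add, map_neg] at c3
    simp only [map_add, LinearMap.add_apply, o1, o2, c1, c2, zero_add, add_zero]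
    linear_combination (norm := module) -c3
  · -- J orthogonal
    intro U V
    exact pairC_J C J hJ U V
  · -- K orthogonal
    intro U V
    show C.pairC ((-Complex.I) • (Os U - Obf Os U))
      ((-Complex.I) • (Os V - Obf Os V)) = C.pairC U V
    have o1 : C.pairC (Os U) (Os V) = 0 := L_orth h (Os_mem_L h U) (Os_mem_L h V)
    have o2 : C.pairC (Obf Os U) (Obf Os V) = 0 :=
      M_orth h (Obf_mem_M h U) (Obf_mem_M h V)
    have c1 : C.pairC (Os U) (Obf Os V) = -C.pairC U (Os (Obf Os V)) := h.hskew _ _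
    have c2 : C.pairC (Obf Os U) (Os V) = -C.pairC U (Obf Os (Os V)) := skewOb h _ _
    have c3 := congrArg (C.pairC U) (hnd' h V)
    rw [map_add, map_neg] at c3
    rw [map_smul, map_smul, LinearMap.smul_apply, smul_smul, neg_mul_neg,
      Complex.I_mul_I, neg_one_smul]
    simp only [map_sub, LinearMap.sub_apply, o1, o2, c1, c2]
    linear_combination (norm := module) -c3
  · -- the six Nijenhuis concomitants
    intro F G hF hG U V
    simp only [Set.mem_insert_iff, Set.mem_singleton_iff] at hF hG
    rcases hF with h1 | h1 | h1 <;> rcases hG with h2 | h2 | h2 <;> subst h1 <;> subst h2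
    · rw [Ifun_eq]; exact NII h U V
    · rw [Ifun_eq]; exact NIJ h U V
    · rw [Ifun_eq, Kfun_eq]; exact NIK h U V
    · rw [Ifun_eq, nijGen_comm]; exact NIJ h U V
    · exact NJJC C J hJ U V
    · rw [Kfun_eq, nijGen_comm]; exact NKJ h U V
    · rw [Ifun_eq, Kfun_eq, nijGen_comm]; exact NIK h U V
    · rw [Kfun_eq]; exact NKJ h U V
    · rw [Kfun_eq]; exact NKK h U V
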